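/- For every integer N ≥ 1, the N×N matrix Δ with entries Δ_{t,t'} = Σ_{k=0}^{N−1} (−2πik/N²)·e^{2πik(t−t')/N} satisfies: (i) the matrix exponential exp(Δ) equals the cyclic shift matrix U₊ (with (U₊)_{t,t'} = 1 if t ≡ t'+1 (mod N) and 0 otherwise); and (ii) the spectral norm of Δ equals 2π(N−1)/N; in particular ‖Δ‖ < 2π. -/

import Mathlib

open scoped Matrix.Norms.L2Operator Kronecker
open Matrix Complex

noncomputable section

/-- The `N×N` clock-displacement generator
`Δ_{t,t'} = ∑_{k=0}^{N−1} (−2πik/N²)·e^{2πik(t−t')/N}`. -/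
noncomputable def DeltaMat (N : ℕ) : Matrix (Fin N) (Fin N) ℂ := fun t t' =>
  ∑ k ∈ Finset.range N,
    (-(2 * Real.pi * Complex.I * k) / (N : ℂ) ^ 2) *
      Complex.exp (2 * Real.pi * Complex.I * k * (((t : ℕ) : ℂ) - ((t' : ℕ) : ℂ)) / N)

/-- The cyclic shift matrix `(U₊)_{t,t'} = 1` iff `t ≡ t' + 1 (mod N)`. -/
def shiftMat (N : ℕ) : Matrix (Fin N) (Fin N) ℂ := fun t t' =>
  if ((t : ℕ) : ZMod N) = ((t' : ℕ) : ZMod N) + 1 then 1 else 0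

/-- key root-of-unity kernel sum -/
lemma kerSum (N : ℕ) (hN : 1 ≤ N) (m : ℤ) :
    ∑ k ∈ Finset.range N, Complex.exp (2 * Real.pi * I * m * k / N)
      = if (N : ℤ) ∣ m then (N : ℂ) else 0 := by
  have hN0 : (N : ℂ) ≠ 0 := by exact_mod_cast (Nat.pos_of_ne_zero (by omega)).ne'
  set ζ : ℂ := Complex.exp (2 * Real.pi * I * m / N) with hζ
  have hterm : ∀ k : ℕ, Complex.exp (2 * Real.pi * I * m * k / N) = ζ ^ k := by
    intro k
    rw [hζ, ← Complex.exp_nat_mul]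
    ring_nf
  simp_rw [hterm]
  by_cases hdvd : (N : ℤ) ∣ m
  · obtain ⟨j, hj⟩ := hdvd
    have hζ1 : ζ = 1 := by
      rw [hζ, hj]
      push_cast
      rw [show 2 * Real.pi * I * ((N : ℂ) * (j:ℂ)) / N = (j:ℂ) * (2 * Real.pi * I) by
        field_simp]
      exact Complex.exp_int_mul_two_pi_mul_I j
    rw [if_pos (show (N:ℤ) ∣ m from ⟨j, hj⟩)]
    simp [hζ1]
  · have hζne : ζ ≠ 1 := by
      intro h
      rw [hζ, Complex.exp_eq_one_iff] at h
      obtain ⟨n, hn⟩ := h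
      apply hdvd
      refine ⟨n, ?_⟩
      have h2 : (2 * Real.pi * I : ℂ) ≠ 0 := by
        simp [Real.pi_ne_zero, Complex.I_ne_zero]
      field_simp at hn
      have hn' : 2 * (Real.pi:ℂ) * I * (m:ℂ) = 2 * (Real.pi:ℂ) * I * ((n:ℂ) * N) := by
        rw [hn]; ring
      have : (m : ℂ) = (n : ℂ) * N := mul_left_cancel₀ h2 hn'
      have h3 : m = n * (N:ℤ) := by exact_mod_cast this
      rw [h3, mul_comm]
    rw [geom_sum_eq hζne]
    have hζN : ζ ^ N = 1 := by
      rw [hζ, ← Complex.exp_nat_mul]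
      rw [show (N:ℂ) * (2 * Real.pi * I * m / N) = (m:ℂ) * (2 * Real.pi * I) by
        field_simp]
      exact Complex.exp_int_mul_two_pi_mul_I m
    simp [hζN, hdvd]

/-- normalized DFT matrix -/
def Wmat (N : ℕ) : Matrix (Fin N) (Fin N) ℂ := fun t k =>
  (((Real.sqrt N)⁻¹ : ℝ) : ℂ) * Complex.exp (2 * Real.pi * I * t * k / N)

lemma sqrt_mul_self_c (N : ℕ) :
    ((((Real.sqrt N)⁻¹ : ℝ) : ℂ)) * ((((Real.sqrt N)⁻¹ : ℝ) : ℂ)) = (N : ℂ)⁻¹ := by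
  rw [← Complex.ofReal_mul, ← mul_inv, Real.mul_self_sqrt (Nat.cast_nonneg N)]
  push_cast
  ring

lemma conj_entry (N : ℕ) (f : Fin N → ℂ) (t t' : Fin N) :
    (Wmat N * Matrix.diagonal f * (Wmat N)ᴴ) t t'
      = (N : ℂ)⁻¹ * ∑ k : Fin N,
          f k * Complex.exp (2 * Real.pi * I * k * (((t:ℕ):ℂ) - ((t':ℕ):ℂ)) / N) := by
  rw [Matrix.mul_apply, Finset.mul_sum]
  apply Finset.sum_congr rfl
  intro k _
  rw [Matrix.mul_apply, Finset.sum_eq_single k]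
  · rw [Matrix.conjTranspose_apply, Matrix.diagonal_apply_eq, Wmat, Wmat]
    rw [star_mul']
    rw [show (star ((((Real.sqrt N)⁻¹ : ℝ) : ℂ)) : ℂ) = (((Real.sqrt N)⁻¹ : ℝ) : ℂ) by
      simp [Complex.star_def, Complex.conj_ofReal]]
    have hc : (starRingEnd ℂ) (2 * Real.pi * I * t' * k / N)
        = -(2 * Real.pi * I * t' * k / N) := by
      simp [Complex.conj_ofReal, map_div₀, map_ofNat]
      ring
    rw [show (star (Complex.exp (2 * ↑Real.pi * I * ↑↑t' * ↑↑k / ↑N)) : ℂ)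
        = (starRingEnd ℂ) (Complex.exp (2 * ↑Real.pi * I * ↑↑t' * ↑↑k / ↑N)) from rfl]
    rw [← Complex.exp_conj, hc]
    rw [show ((((Real.sqrt N)⁻¹:ℝ):ℂ) * Complex.exp (2 * Real.pi * I * t * k / N) *
          f k) * ((((Real.sqrt N)⁻¹:ℝ):ℂ) * Complex.exp (-(2 * Real.pi * I * t' * k / N)))
        = ((((Real.sqrt N)⁻¹:ℝ):ℂ) * (((Real.sqrt N)⁻¹:ℝ):ℂ)) * (f k *
            (Complex.exp (2 * Real.pi * I * t * k / N) *
             Complex.exp (-(2 * Real.pi * I * t' * k / N)))) by ring]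
    rw [sqrt_mul_self_c, ← Complex.exp_add]
    congr 2
    ring
  · intro b _ hb
    rw [Matrix.diagonal_apply_ne _ hb]
    ring
  · intro h
    exact absurd (Finset.mem_univ k) h

lemma fin_dvd_eq {N : ℕ} (t t' : Fin N) (h : (N:ℤ) ∣ ((t:ℕ):ℤ) - ((t':ℕ):ℤ)) : t = t' := by
  rcases h with ⟨c, hc⟩
  have h1 : ((t:ℕ):ℤ) < N := by exact_mod_cast t.isLt
  have h2 : ((t':ℕ):ℤ) < N := by exact_mod_cast t'.isLt
  have h3 : (0:ℤ) ≤ ((t:ℕ):ℤ) := Int.natCast_nonneg _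
  have h4 : (0:ℤ) ≤ ((t':ℕ):ℤ) := Int.natCast_nonneg _
  have hc0 : c = 0 := by
    rcases lt_trichotomy c 0 with h | h | h
    · nlinarith
    · exact h
    · nlinarith
  rw [hc0, mul_zero] at hc
  ext
  omega

lemma WWstar (N : ℕ) (hN : 1 ≤ N) : Wmat N * (Wmat N)ᴴ = 1 := by
  have hD : Wmat N * Matrix.diagonal (fun _ : Fin N => (1:ℂ)) * (Wmat N)ᴴ
      = Wmat N * (Wmat N)ᴴ := by
    rw [Matrix.diagonal_one, Matrix.mul_one]
  rw [← hD]
  ext t t'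
  rw [conj_entry]
  rw [show (∑ k : Fin N, (1:ℂ) *
        Complex.exp (2 * Real.pi * I * k * (((t:ℕ):ℂ) - ((t':ℕ):ℂ)) / N))
      = ∑ k ∈ Finset.range N,
        Complex.exp (2 * Real.pi * I * ((((t:ℕ):ℤ) - ((t':ℕ):ℤ) : ℤ):ℂ) * k / N) by
    rw [← Fin.sum_univ_eq_sum_range (fun k : ℕ =>
      Complex.exp (2 * Real.pi * I * ((((t:ℕ):ℤ) - ((t':ℕ):ℤ) : ℤ):ℂ) * k / N))]
    apply Finset.sum_congr rfl
    intro k _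
    rw [one_mul]
    congr 1
    push_cast
    ring]
  rw [kerSum N hN]
  by_cases h : t = t'
  · subst h
    rw [if_pos (by simp)]
    rw [Matrix.one_apply_eq]
    have hN0 : (N:ℂ) ≠ 0 := by exact_mod_cast (Nat.pos_of_ne_zero (by omega)).ne'
    field_simp
  · rw [if_neg (fun hd => h (fin_dvd_eq t t' hd)), Matrix.one_apply_ne h, mul_zero]

lemma Wunitary (N : ℕ) (hN : 1 ≤ N) : Wmat N ∈ unitary (Matrix (Fin N) (Fin N) ℂ) := by
  rw [Unitary.mem_iff]
  constructor
  · rw [Matrix.star_eq_conjTranspose]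
    exact mul_eq_one_comm.mp (WWstar N hN)
  · rw [Matrix.star_eq_conjTranspose]
    exact WWstar N hN

lemma delta_eq (N : ℕ) (hN : 1 ≤ N) :
    DeltaMat N = Wmat N * Matrix.diagonal
      (fun k : Fin N => -(2 * Real.pi * I * ((k:ℕ):ℂ)) / N) * (Wmat N)ᴴ := by
  have hN0 : (N:ℂ) ≠ 0 := by exact_mod_cast (Nat.pos_of_ne_zero (by omega)).ne'
  ext t t'
  simp only [DeltaMat]
  rw [conj_entry, Finset.mul_sum,
    ← Fin.sum_univ_eq_sum_range (fun k : ℕ =>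
      (-(2 * Real.pi * Complex.I * k) / (N : ℂ) ^ 2) *
        Complex.exp (2 * Real.pi * Complex.I * k * (((t:ℕ):ℂ) - ((t':ℕ):ℂ)) / N))]
  apply Finset.sum_congr rfl
  intro k _
  rw [pow_two]
  field_simp

lemma shift_eq (N : ℕ) (hN : 1 ≤ N) :
    Wmat N * Matrix.diagonal
      (fun k : Fin N => Complex.exp (-(2 * Real.pi * I * ((k:ℕ):ℂ)) / N)) * (Wmat N)ᴴ
      = shiftMat N := by
  ext t t'
  rw [conj_entry]
  set m : ℤ := ((t:ℕ):ℤ) - ((t':ℕ):ℤ) - 1 with hm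
  rw [show (∑ k : Fin N, Complex.exp (-(2 * Real.pi * I * ((k:ℕ):ℂ)) / N) *
        Complex.exp (2 * Real.pi * I * k * (((t:ℕ):ℂ) - ((t':ℕ):ℂ)) / N))
      = ∑ k ∈ Finset.range N, Complex.exp (2 * Real.pi * I * ((m:ℤ):ℂ) * k / N) by
    rw [← Fin.sum_univ_eq_sum_range (fun k : ℕ =>
      Complex.exp (2 * Real.pi * I * ((m:ℤ):ℂ) * k / N))]
    apply Finset.sum_congr rfl
    intro k _
    rw [← Complex.exp_add]
    congr 1
    rw [hm]
    push_cast
    ring]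
  rw [kerSum N hN]
  rw [shiftMat]
  have hiff : ((N:ℤ) ∣ m) ↔ (((t:ℕ) : ZMod N) = ((t':ℕ) : ZMod N) + 1) := by
    rw [← ZMod.intCast_zmod_eq_zero_iff_dvd, hm]
    push_cast
    constructor
    · intro h
      have := sub_eq_zero.mp (by rwa [show ((t:ℕ):ZMod N) - ((t':ℕ):ZMod N) - 1
        = ((t:ℕ):ZMod N) - (((t':ℕ):ZMod N) + 1) by ring] at h)
      exact this
    · intro h
      rw [h]; ring
  by_cases h : (N:ℤ) ∣ m
  · rw [if_pos h, if_pos (hiff.mp h)]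
    have hN0 : (N:ℂ) ≠ 0 := by exact_mod_cast (Nat.pos_of_ne_zero (by omega)).ne'
    field_simp
  · rw [if_neg h, if_neg (fun hc => h (hiff.mpr hc)), mul_zero]

lemma exp_delta (N : ℕ) (hN : 1 ≤ N) :
    NormedSpace.exp (DeltaMat N) = shiftMat N := by
  have hWinv : (Wmat N)⁻¹ = (Wmat N)ᴴ := Matrix.inv_eq_right_inv (WWstar N hN)
  have hU : IsUnit (Wmat N) := by
    have := invertibleOfRightInverse _ _ (WWstar N hN)
    exact isUnit_of_invertible _
  rw [delta_eq N hN, ← hWinv, Matrix.exp_conj _ _ hU, Matrix.exp_diagonal, hWinv,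
    ← shift_eq N hN]
  have hpe : (NormedSpace.exp fun k : Fin N => -(2 * Real.pi * I * ((k:ℕ):ℂ)) / N)
      = fun k : Fin N => Complex.exp (-(2 * Real.pi * I * ((k:ℕ):ℂ)) / N) := by
    rw [Pi.exp_def]
    funext k
    exact (congrFun Complex.exp_eq_exp_ℂ _).symm
  rw [hpe]

lemma diag_norm_le (N : ℕ) (d : Fin N → ℂ) (c : ℝ) (hc : 0 ≤ c) (h : ∀ i, ‖d i‖ ≤ c) :
    ‖Matrix.diagonal d‖ ≤ c := by
  rw [Matrix.l2_opNorm_def]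
  refine ContinuousLinearMap.opNorm_le_bound _ hc fun x => ?_
  have happ : ∀ i, ((Matrix.toEuclideanLin (𝕜 := ℂ) (Matrix.diagonal d)) x) i = d i * x i := by
    intro i
    have h0 : ((Matrix.toEuclideanLin (𝕜 := ℂ) (Matrix.diagonal d)) x) i
        = (Matrix.diagonal d *ᵥ (WithLp.equiv 2 (Fin N → ℂ) x)) i := rfl
    rw [h0, Matrix.mulVec_diagonal]
    rfl
  have hrfl : ((Matrix.toEuclideanLin (m := Fin N) (n := Fin N) (𝕜 := ℂ)) ≪≫ₗ
      LinearMap.toContinuousLinearMap) (Matrix.diagonal d) x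
      = (Matrix.toEuclideanLin (𝕜 := ℂ) (Matrix.diagonal d)) x := rfl
  rw [hrfl]
  rw [EuclideanSpace.norm_eq ((Matrix.toEuclideanLin (𝕜 := ℂ) (Matrix.diagonal d)) x),
    EuclideanSpace.norm_eq (𝕜 := ℂ) x]
  rw [show c * Real.sqrt (∑ i, ‖x i‖ ^ 2) = Real.sqrt (c^2 * ∑ i, ‖x i‖ ^ 2) by
    rw [Real.sqrt_mul (by positivity), Real.sqrt_sq hc]]
  apply Real.sqrt_le_sqrt
  rw [Finset.mul_sum]
  apply Finset.sum_le_sum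
  intro i _
  rw [happ i, norm_mul, mul_pow]
  have h3 : ‖d i‖^2 ≤ c^2 := by nlinarith [norm_nonneg (d i), h i]
  exact mul_le_mul_of_nonneg_right h3 (by positivity)

lemma diag_norm_ge (N : ℕ) (d : Fin N → ℂ) (i : Fin N) : ‖d i‖ ≤ ‖Matrix.diagonal d‖ := by
  have h := Matrix.l2_opNorm_mulVec (Matrix.diagonal d) (EuclideanSpace.single i 1)
  rw [EuclideanSpace.norm_single, norm_one, mul_one] at h
  refine le_trans ?_ h
  have happ : ((EuclideanSpace.equiv (Fin N) ℂ).symm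
      (Matrix.diagonal d *ᵥ (EuclideanSpace.single i (1:ℂ)))) i = d i := by
    simp [Matrix.mulVec_diagonal, EuclideanSpace.single_apply]
  calc ‖d i‖ = ‖((EuclideanSpace.equiv (Fin N) ℂ).symm
      (Matrix.diagonal d *ᵥ (EuclideanSpace.single i (1:ℂ)))) i‖ := by rw [happ]
    _ ≤ _ := by
        set y := ((EuclideanSpace.equiv (Fin N) ℂ).symm
          (Matrix.diagonal d *ᵥ (EuclideanSpace.single i (1:ℂ))))
        rw [EuclideanSpace.norm_eq, ← Real.sqrt_sq (norm_nonneg (y i))]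
        apply Real.sqrt_le_sqrt
        exact Finset.single_le_sum (f := fun j => ‖y j‖^2)
          (fun j _ => by positivity) (Finset.mem_univ i)

lemma dnorm (N : ℕ) (k : ℕ) :
    ‖((-(2 * Real.pi * I * (k:ℂ)) / N) : ℂ)‖ = 2 * Real.pi * k / N := by
  rw [norm_div, norm_neg]
  simp [Complex.norm_natCast, _root_.abs_of_nonneg Real.pi_pos.le]

lemma diag_norm_val (N : ℕ) (hN : 1 ≤ N) :
    ‖Matrix.diagonal (fun k : Fin N => -(2 * Real.pi * I * ((k:ℕ):ℂ)) / N)‖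
      = 2 * Real.pi * ((N:ℝ) - 1) / N := by
  have hNpos : (0:ℝ) < N := by exact_mod_cast Nat.pos_of_ne_zero (by omega)
  have hcpos : (0:ℝ) ≤ 2 * Real.pi * ((N:ℝ) - 1) / N := by
    have h1 : (1:ℝ) ≤ N := by exact_mod_cast hN
    have h2 : (0:ℝ) ≤ (N:ℝ) - 1 := by linarith
    have := Real.pi_pos
    positivity
  refine le_antisymm ?_ ?_
  · apply diag_norm_le _ _ _ hcpos
    intro i
    rw [dnorm]
    have hi : ((i:ℕ):ℝ) ≤ (N:ℝ) - 1 := by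
      have := i.isLt
      have : ((i:ℕ):ℝ) + 1 ≤ (N:ℝ) := by exact_mod_cast i.isLt
      linarith
    have hmul : 2 * Real.pi * ((i:ℕ):ℝ) ≤ 2 * Real.pi * ((N:ℝ) - 1) := by
      nlinarith [Real.pi_pos]
    exact div_le_div_of_nonneg_right hmul hNpos.le
  · have h := diag_norm_ge N (fun k : Fin N => -(2 * Real.pi * I * ((k:ℕ):ℂ)) / N)
      ⟨N - 1, by omega⟩
    rw [dnorm] at h
    convert h using 2
    · rfl
    have : ((N - 1 : ℕ) : ℝ) = (N:ℝ) - 1 := by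
      have := Nat.cast_sub hN (R := ℝ)
      simpa using this
    rw [this]

theorem stmt3 (N : ℕ) (hN : 1 ≤ N) :
    NormedSpace.exp (DeltaMat N) = shiftMat N ∧
    ‖DeltaMat N‖ = 2 * Real.pi * (N - 1) / N ∧
    ‖DeltaMat N‖ < 2 * Real.pi := by
  haveI : Nonempty (Fin N) := ⟨⟨0, by omega⟩⟩
  have hnorm : ‖DeltaMat N‖ = 2 * Real.pi * ((N:ℝ) - 1) / N := by
    rw [delta_eq N hN, mul_assoc,
      CStarRing.norm_mem_unitary_mul _ (Wunitary N hN),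
      ← Matrix.star_eq_conjTranspose,
      CStarRing.norm_mul_mem_unitary _ (Unitary.star_mem (Wunitary N hN)),
      diag_norm_val N hN]
  refine ⟨exp_delta N hN, hnorm, ?_⟩
  rw [hnorm]
  have hNpos : (0:ℝ) < N := by exact_mod_cast Nat.pos_of_ne_zero (by omega)
  rw [mul_div_assoc]
  have hlt : ((N:ℝ) - 1) / N < 1 := by
    rw [div_lt_one hNpos]
    linarith
  nlinarith [Real.pi_pos]
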